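/- With γ, b, n, t, κ_g, κ_n as above and λ₀ ∈ ℝ⁴_2, define h(s) = ⟨γ(s), λ₀⟩ + 1. If κ_g(s₀) ± κ_n(s₀) ≠ 0 and λ₀ = γ(s₀) + (1/(κ_g(s₀) ± κ_n(s₀)))(b(s₀) ± n(s₀)), then h(s₀) = h'(s₀) = h''(s₀) = 0. -/

import Mathlib

/-- The index-2 pseudo scalar product on ℝ⁴. -/
def pseudo4 (x y : Fin 4 → ℝ) : ℝ :=
  ∑ i : Fin 4, (if (i : ℕ) < 2 then (-1 : ℝ) else 1) * x i * y i

lemma pseudo4_add_left (x y z : Fin 4 → ℝ) : pseudo4 (x + y) z = pseudo4 x z + pseudo4 y z := by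
  simp [pseudo4, ← Finset.sum_add_distrib]; congr 1; ext i; split_ifs <;> ring

lemma pseudo4_smul_left (c : ℝ) (x z : Fin 4 → ℝ) : pseudo4 (c • x) z = c * pseudo4 x z := by
  simp [pseudo4, Finset.mul_sum]; congr 1; ext i; ring

lemma pseudo4_comm (x y : Fin 4 → ℝ) : pseudo4 x y = pseudo4 y x := by
  simp [pseudo4]; congr 1; ext i; ring

lemma pseudo4_sub_left (x y z : Fin 4 → ℝ) : pseudo4 (x - y) z = pseudo4 x z - pseudo4 y z := by
  simp [pseudo4, ← Finset.sum_sub_distrib]; congr 1; ext i; split_ifs <;> ring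

lemma pseudo4_add_right (x y z : Fin 4 → ℝ) : pseudo4 z (x + y) = pseudo4 z x + pseudo4 z y := by
  rw [pseudo4_comm, pseudo4_add_left, pseudo4_comm x z, pseudo4_comm y z]

lemma pseudo4_smul_right (c : ℝ) (x z : Fin 4 → ℝ) : pseudo4 z (c • x) = c * pseudo4 z x := by
  rw [pseudo4_comm, pseudo4_smul_left, pseudo4_comm x z]

lemma hasDerivAt_comp_pseudo4 {f : ℝ → Fin 4 → ℝ} {d : Fin 4 → ℝ} {s : ℝ}
    (hf : HasDerivAt f d s) (v : Fin 4 → ℝ) :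
    HasDerivAt (fun s => pseudo4 (f s) v) (pseudo4 d v) s := by
  have hcomp : ∀ i : Fin 4, HasDerivAt (fun s => f s i) (d i) s := fun i =>
    (ContinuousLinearMap.proj (R := ℝ) (φ := fun _ : Fin 4 => ℝ) i).hasFDerivAt.comp_hasDerivAt s hf
  unfold pseudo4
  exact HasDerivAt.fun_sum fun i _ =>
    ((hcomp i).const_mul _).mul_const _

/-- If λ₀ = γ(s₀) + (κ_g(s₀) ± κ_n(s₀))⁻¹ (b(s₀) ± n(s₀)), then the AdS height
function h(s) = ⟨γ(s),λ₀⟩ + 1 vanishes to second order at s₀.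
The sign ± is encoded by ε ∈ {1,-1}. -/
theorem stmt_12 (γ b n t : ℝ → Fin 4 → ℝ) (κg κn τg : ℝ → ℝ)
    (hγd : Differentiable ℝ γ) (hbd : Differentiable ℝ b)
    (hnd : Differentiable ℝ n) (htd : Differentiable ℝ t)
    (hγ' : ∀ s, deriv γ s = t s)
    (hb' : ∀ s, deriv b s = τg s • n s - κg s • t s)
    (hn' : ∀ s, deriv n s = τg s • b s - κn s • t s)
    (ht' : ∀ s, deriv t s = γ s - κg s • b s + κn s • n s)
    (hγγ : ∀ s, pseudo4 (γ s) (γ s) = -1)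
    (hbb : ∀ s, pseudo4 (b s) (b s) = -1)
    (hnn : ∀ s, pseudo4 (n s) (n s) = 1)
    (htt : ∀ s, pseudo4 (t s) (t s) = 1)
    (hγb : ∀ s, pseudo4 (γ s) (b s) = 0)
    (hγn : ∀ s, pseudo4 (γ s) (n s) = 0)
    (hγt : ∀ s, pseudo4 (γ s) (t s) = 0)
    (hbn : ∀ s, pseudo4 (b s) (n s) = 0)
    (hbt : ∀ s, pseudo4 (b s) (t s) = 0)
    (hnt : ∀ s, pseudo4 (n s) (t s) = 0)
    (ε : ℝ) (hε : ε = 1 ∨ ε = -1)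
    (s₀ : ℝ) (hne : κg s₀ + ε * κn s₀ ≠ 0)
    (lam₀ : Fin 4 → ℝ)
    (hlam : lam₀ = γ s₀ + (κg s₀ + ε * κn s₀)⁻¹ • (b s₀ + ε • n s₀))
    (h : ℝ → ℝ) (hh : h = fun s => pseudo4 (γ s) lam₀ + 1) :
    h s₀ = 0 ∧ deriv h s₀ = 0 ∧ deriv (deriv h) s₀ = 0 := by
  -- pairings of the frame vectors at s₀ with lam₀
  have pγ : pseudo4 (γ s₀) lam₀ = -1 := by
    rw [hlam, pseudo4_add_right, pseudo4_smul_right, pseudo4_add_right, pseudo4_smul_right,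
      hγγ, hγb, hγn]; ring
  have pt : pseudo4 (t s₀) lam₀ = 0 := by
    rw [hlam, pseudo4_add_right, pseudo4_smul_right, pseudo4_add_right, pseudo4_smul_right,
      pseudo4_comm (t s₀) (γ s₀), pseudo4_comm (t s₀) (b s₀), pseudo4_comm (t s₀) (n s₀),
      hγt, hbt, hnt]; ring
  have pb : pseudo4 (b s₀) lam₀ = -(κg s₀ + ε * κn s₀)⁻¹ := by
    rw [hlam, pseudo4_add_right, pseudo4_smul_right, pseudo4_add_right, pseudo4_smul_right,
      pseudo4_comm (b s₀) (γ s₀), hγb, hbb, hbn]; ring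
  have pn : pseudo4 (n s₀) lam₀ = ε * (κg s₀ + ε * κn s₀)⁻¹ := by
    rw [hlam, pseudo4_add_right, pseudo4_smul_right, pseudo4_add_right, pseudo4_smul_right,
      pseudo4_comm (n s₀) (γ s₀), hγn, pseudo4_comm (n s₀) (b s₀), hbn, hnn]; ring
  -- first derivative of h
  have hd1 : ∀ s, deriv h s = pseudo4 (t s) lam₀ := by
    intro s
    have H : HasDerivAt h (pseudo4 (t s) lam₀) s := by
      rw [hh]
      have := (hasDerivAt_comp_pseudo4 ((hγd s).hasDerivAt) lam₀).add_const 1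
      rwa [hγ' s] at this
    exact H.deriv
  have hd1' : deriv h = fun s => pseudo4 (t s) lam₀ := funext hd1
  -- second derivative at s₀
  have hd2 : deriv (deriv h) s₀ = pseudo4 (γ s₀ - κg s₀ • b s₀ + κn s₀ • n s₀) lam₀ := by
    rw [hd1']
    have H := hasDerivAt_comp_pseudo4 ((htd s₀).hasDerivAt) lam₀
    rw [ht' s₀] at H
    exact H.deriv
  refine ⟨?_, ?_, ?_⟩
  · rw [hh]; simp [pγ]
  · rw [hd1 s₀, pt]
  · rw [hd2, pseudo4_add_left, pseudo4_sub_left, pseudo4_smul_left, pseudo4_smul_left,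
      pγ, pb, pn]
    have hεε : ε * ε = 1 := by rcases hε with h | h <;> rw [h] <;> norm_num
    field_simp
    nlinarith [hεε, mul_inv_cancel₀ hne]
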